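/- Let H_κ = K + κ E where K is Hermitian positive definite, E is Hermitian positive semidefinite, and κ > 0. Write H_κ in block form with respect to the decomposition ℂⁿ = ker(E) ⊕ ker(E)^⊥ as H_κ = [[L, R*],[R, W + κ E₂]] where E₂ (the compression of E to ker(E)^⊥) is positive definite, and let D_κ = diag(L, W + κE₂). Then ‖D_κ^{-1/2}(D_κ − H_κ)D_κ^{-1/2}‖₂ ≤ C/√κ for some constant C independent of κ, for all κ sufficiently large. -/

import Mathlib

open Matrix
open scoped ComplexOrder

noncomputable def specNorm {n : Type*} [Fintype n] [DecidableEq n] (A : Matrix n n ℂ) : ℝ :=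
  ‖Matrix.toEuclideanCLM (𝕜 := ℂ) A‖

noncomputable def frobNorm {m k : Type*} [Fintype m] [Fintype k] (A : Matrix m k ℂ) : ℝ :=
  Real.sqrt (∑ i, ∑ j, ‖A i j‖ ^ 2)

noncomputable def psqrt {n : Type*} [Fintype n] [DecidableEq n] {A : Matrix n n ℂ}
    (hA : A.PosDef) : Matrix n n ℂ :=
  hA.posSemidef.1.eigenvectorUnitary.1 * diagonal ((↑) ∘ Real.sqrt ∘ hA.posSemidef.1.eigenvalues) *
    (star hA.posSemidef.1.eigenvectorUnitary : Matrix n n ℂ)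

namespace Stmt15Aux

/-- squared euclidean norm of a vector -/
noncomputable def q {n : Type*} [Fintype n] (v : n → ℂ) : ℝ := ∑ i, ‖v i‖ ^ 2

lemma q_nonneg {n : Type*} [Fintype n] (v : n → ℂ) : 0 ≤ q v :=
  Finset.sum_nonneg fun _ _ => sq_nonneg _

lemma q_neg {n : Type*} [Fintype n] (v : n → ℂ) : q (-v) = q v := by
  unfold q; simp

lemma q_mulVec_le {a b : Type*} [Fintype a] [Fintype b] (A : Matrix a b ℂ) (v : b → ℂ) :
    q (A *ᵥ v) ≤ frobNorm A ^ 2 * q v := by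
  have hf : frobNorm A ^ 2 = ∑ i, ∑ j, ‖A i j‖ ^ 2 :=
    Real.sq_sqrt (Finset.sum_nonneg fun _ _ => Finset.sum_nonneg fun _ _ => sq_nonneg _)
  rw [hf, q, Finset.sum_mul]
  apply Finset.sum_le_sum
  intro i _
  calc ‖(A *ᵥ v) i‖ ^ 2 ≤ (∑ j, ‖A i j‖ * ‖v j‖) ^ 2 := by
        apply pow_le_pow_left₀ (norm_nonneg _)
        refine (norm_sum_le _ _).trans ?_
        exact le_of_eq (Finset.sum_congr rfl fun j _ => norm_mul _ _)
    _ ≤ (∑ j, ‖A i j‖ ^ 2) * ∑ j, ‖v j‖ ^ 2 :=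
        Finset.sum_mul_sq_le_sq_mul_sq _ _ _
    _ = (∑ j, ‖A i j‖ ^ 2) * q v := rfl

lemma specNorm_le_of_q {n : Type*} [Fintype n] [DecidableEq n] {A : Matrix n n ℂ} {c : ℝ}
    (hc : 0 ≤ c) (h : ∀ v : n → ℂ, q (A *ᵥ v) ≤ c ^ 2 * q v) : specNorm A ≤ c := by
  apply ContinuousLinearMap.opNorm_le_bound _ hc
  intro x
  have h1 : ‖Matrix.toEuclideanCLM (𝕜 := ℂ) A x‖ = Real.sqrt (q (A *ᵥ (fun j => x j))) := by
    rw [EuclideanSpace.norm_eq, q]; rfl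
  have h2 : ‖x‖ = Real.sqrt (q (fun j => x j)) := by
    rw [EuclideanSpace.norm_eq, q]
  rw [h1, h2]
  calc Real.sqrt (q (A *ᵥ fun j => x j)) ≤ Real.sqrt (c ^ 2 * q (fun j => x j)) :=
        Real.sqrt_le_sqrt (h _)
    _ = c * Real.sqrt (q fun j => x j) := by
        rw [Real.sqrt_mul (sq_nonneg _), Real.sqrt_sq hc]

lemma q_elim {a b : Type*} [Fintype a] [Fintype b] (u : a → ℂ) (w : b → ℂ) :
    q (Sum.elim u w) = q u + q w := by
  rw [q, Fintype.sum_sum_type]; rfl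

lemma star_elim {a b : Type*} (u : a → ℂ) (w : b → ℂ) :
    star (Sum.elim u w) = Sum.elim (star u) (star w) := by
  funext i; cases i <;> rfl

lemma dot_elim {a b : Type*} [Fintype a] [Fintype b] (u p : a → ℂ) (w r : b → ℂ) :
    dotProduct (Sum.elim u w) (Sum.elim p r) = dotProduct u p + dotProduct w r := by
  rw [dotProduct, Fintype.sum_sum_type]; rfl

lemma posDef_blocks {a b : Type*} [Fintype a] [Fintype b] [DecidableEq a] [DecidableEq b]
    {A : Matrix a a ℂ} {B : Matrix a b ℂ} {C : Matrix b a ℂ} {D : Matrix b b ℂ}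
    (h : (fromBlocks A B C D).PosDef) : A.PosDef ∧ D.PosDef := by
  have hH := h.1
  rw [Matrix.IsHermitian, fromBlocks_conjTranspose] at hH
  have hA : A.IsHermitian := congrArg Matrix.toBlocks₁₁ hH
  have hD : D.IsHermitian := congrArg Matrix.toBlocks₂₂ hH
  constructor
  · refine PosDef.of_dotProduct_mulVec_pos hA fun x hx => ?_
    have hx' : Sum.elim x (0 : b → ℂ) ≠ 0 := by
      intro hc; apply hx; funext i; exact congrFun hc (Sum.inl i)
    have := h.dotProduct_mulVec_pos hx'
    simpa [star_elim, fromBlocks_mulVec, dot_elim, mulVec_zero] using this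
  · refine PosDef.of_dotProduct_mulVec_pos hD fun x hx => ?_
    have hx' : Sum.elim (0 : a → ℂ) x ≠ 0 := by
      intro hc; apply hx; funext i; exact congrFun hc (Sum.inr i)
    have := h.dotProduct_mulVec_pos hx'
    simpa [star_elim, fromBlocks_mulVec, dot_elim, mulVec_zero] using this

lemma posSemidef_blockDiag {a b : Type*} [Fintype a] [Fintype b] [DecidableEq a] [DecidableEq b]
    {A : Matrix a a ℂ} {D : Matrix b b ℂ} (hA : A.PosSemidef) (hD : D.PosSemidef) :
    (fromBlocks A 0 0 D).PosSemidef := by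
  apply PosSemidef.of_dotProduct_mulVec_nonneg
  · rw [Matrix.IsHermitian, fromBlocks_conjTranspose]
    simp [hA.1.eq, hD.1.eq]
  · intro x
    have hx : x = Sum.elim (x ∘ Sum.inl) (x ∘ Sum.inr) := by funext i; cases i <;> rfl
    rw [hx]
    simp only [star_elim, fromBlocks_mulVec, dot_elim, mulVec_zero, zero_mulVec, add_zero,
      zero_add, Sum.elim_inl, Sum.elim_inr, Sum.elim_comp_inl, Sum.elim_comp_inr]
    exact add_nonneg (hA.dotProduct_mulVec_nonneg _) (hD.dotProduct_mulVec_nonneg _)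

open scoped MatrixOrder in
lemma psqrt_eq {n : Type*} [Fintype n] [DecidableEq n] {A : Matrix n n ℂ} (hA : A.PosDef) :
    psqrt hA = CFC.sqrt A := by
  rw [CFC.sqrt_eq_real_sqrt A hA.posSemidef.nonneg, cfcₙ_eq_cfc, hA.1.cfc_eq]
  simp [IsHermitian.cfc, psqrt]

open scoped MatrixOrder in
lemma psqrt_posSemidef {n : Type*} [Fintype n] [DecidableEq n] {A : Matrix n n ℂ}
    (hA : A.PosDef) : (psqrt hA).PosSemidef := by
  rw [psqrt_eq hA]; exact (CFC.sqrt_nonneg A).posSemidef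

open scoped MatrixOrder in
lemma psqrt_mul_self {n : Type*} [Fintype n] [DecidableEq n] {A : Matrix n n ℂ} (hA : A.PosDef) :
    psqrt hA * psqrt hA = A := by
  rw [psqrt_eq hA]; exact CFC.sqrt_mul_sqrt_self A hA.posSemidef.nonneg

lemma psqrt_det_ne {n : Type*} [Fintype n] [DecidableEq n] {A : Matrix n n ℂ} (hA : A.PosDef) :
    (psqrt hA).det ≠ 0 := by
  intro h
  have : A.det = 0 := by rw [← psqrt_mul_self hA, Matrix.det_mul, h, mul_zero]
  exact hA.det_pos.ne' this

lemma psqrt_mul_inv {n : Type*} [Fintype n] [DecidableEq n] {A : Matrix n n ℂ} (hA : A.PosDef) :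
    psqrt hA * (psqrt hA)⁻¹ = 1 :=
  Matrix.mul_nonsing_inv _ (isUnit_iff_ne_zero.mpr (psqrt_det_ne hA))

open scoped MatrixOrder in
lemma blockSqrt {a b : Type*} [Fintype a] [Fintype b] [DecidableEq a] [DecidableEq b]
    {A : Matrix a a ℂ} {D : Matrix b b ℂ} (hA : A.PosDef) (hD : D.PosDef)
    (hblock : (fromBlocks A 0 0 D).PosDef) :
    psqrt hblock = fromBlocks (psqrt hA) 0 0 (psqrt hD) := by
  have hpsd : (fromBlocks (psqrt hA) 0 0 (psqrt hD)).PosSemidef :=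
    posSemidef_blockDiag (psqrt_posSemidef hA) (psqrt_posSemidef hD)
  rw [psqrt_eq hblock]
  refine CFC.sqrt_unique ?_ hpsd.nonneg
  rw [fromBlocks_multiply]
  simp [psqrt_mul_self]

lemma blockInv {a b : Type*} [Fintype a] [Fintype b] [DecidableEq a] [DecidableEq b]
    {A : Matrix a a ℂ} {D : Matrix b b ℂ} (hA : A.PosDef) (hD : D.PosDef) :
    (fromBlocks (psqrt hA) 0 0 (psqrt hD))⁻¹ = fromBlocks (psqrt hA)⁻¹ 0 0 (psqrt hD)⁻¹ := by
  apply Matrix.inv_eq_right_inv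
  rw [fromBlocks_multiply]
  simp [psqrt_mul_inv, fromBlocks_one]

lemma star_dot_self {n : Type*} [Fintype n] (v : n → ℂ) :
    dotProduct (star v) v = (q v : ℂ) := by
  rw [dotProduct, q]
  push_cast
  congr 1
  ext i
  rw [Pi.star_apply, Complex.star_def, mul_comm, Complex.mul_conj']

lemma herm_dot_shift {n : Type*} [Fintype n] {S : Matrix n n ℂ} (hS : S.IsHermitian)
    (w u : n → ℂ) : dotProduct (star w) (S *ᵥ u) = dotProduct (star (S *ᵥ w)) u := by
  rw [star_mulVec, hS.eq, dotProduct_mulVec]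

lemma sqrtinv_q_bound {n : Type*} [Fintype n] [DecidableEq n] {M : Matrix n n ℂ}
    (hM : M.PosDef) {c : ℝ} (hc : 0 < c)
    (hco : ∀ w : n → ℂ, c * q w ≤ (dotProduct (star w) (M *ᵥ w)).re) (y : n → ℂ) :
    q ((psqrt hM)⁻¹ *ᵥ y) ≤ c⁻¹ * q y := by
  set S := psqrt hM with hSdef
  set w := S⁻¹ *ᵥ y with hw
  have hy : S *ᵥ w = y := by
    rw [hw, mulVec_mulVec, psqrt_mul_inv hM, one_mulVec]
  have hSH : S.IsHermitian := (psqrt_posSemidef hM).1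
  have key : dotProduct (star w) (M *ᵥ w) = (q y : ℂ) := by
    rw [← psqrt_mul_self hM, ← hSdef, ← mulVec_mulVec,
      herm_dot_shift hSH, hy, ← star_dot_self]
  have h1 := hco w
  rw [key] at h1
  simp only [Complex.ofReal_re] at h1
  calc q w ≤ c⁻¹ * (c * q w) := by rw [inv_mul_cancel_left₀ hc.ne']
    _ ≤ c⁻¹ * q y := mul_le_mul_of_nonneg_left h1 (inv_nonneg.mpr hc.le)

lemma coercive_of_posDef {n : Type*} [Fintype n] [DecidableEq n] {E : Matrix n n ℂ}
    (hE : E.PosDef) : ∃ lam > (0:ℝ), ∀ z : n → ℂ,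
      lam * q z ≤ (dotProduct (star z) (E *ᵥ z)).re := by
  set B := psqrt hE with hBdef
  have hinv : B⁻¹ * B = 1 :=
    Matrix.nonsing_inv_mul _ (isUnit_iff_ne_zero.mpr (psqrt_det_ne hE))
  set fB := frobNorm B⁻¹ with hfB
  refine ⟨if fB = 0 then 1 else (fB ^ 2)⁻¹, ?_, ?_⟩
  · split
    · exact one_pos
    · positivity
  · intro z
    have hBH : B.IsHermitian := (psqrt_posSemidef hE).1
    have hform : (dotProduct (star z) (E *ᵥ z)).re = q (B *ᵥ z) := by
      rw [← psqrt_mul_self hE, ← hBdef, ← mulVec_mulVec,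
        herm_dot_shift hBH, star_dot_self, Complex.ofReal_re]
    have hz : q z ≤ fB ^ 2 * q (B *ᵥ z) := by
      have hzz : z = B⁻¹ *ᵥ (B *ᵥ z) := by rw [mulVec_mulVec, hinv, one_mulVec]
      calc q z = q (B⁻¹ *ᵥ (B *ᵥ z)) := by rw [← hzz]
        _ ≤ fB ^ 2 * q (B *ᵥ z) := q_mulVec_le _ _
    rw [hform]
    split
    · rename_i h0
      have hle : q z ≤ 0 := by simpa [h0] using hz
      have hz0 : q z = 0 := le_antisymm hle (q_nonneg z)
      simpa [hz0] using q_nonneg (B *ᵥ z)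
    · rename_i h0
      calc (fB ^ 2)⁻¹ * q z ≤ (fB ^ 2)⁻¹ * (fB ^ 2 * q (B *ᵥ z)) :=
            mul_le_mul_of_nonneg_left hz (by positivity)
        _ = q (B *ᵥ z) := by field_simp

end Stmt15Aux

open Stmt15Aux

theorem stmt_15 {k m : ℕ} (L : Matrix (Fin k) (Fin k) ℂ)
    (W : Matrix (Fin m) (Fin m) ℂ) (R : Matrix (Fin m) (Fin k) ℂ)
    (E₂ : Matrix (Fin m) (Fin m) ℂ)
    (hK : (Matrix.fromBlocks L Rᴴ R W).PosDef) (hE₂ : E₂.PosDef) :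
    ∃ C > (0 : ℝ), ∃ κ₀ > (0 : ℝ), ∀ κ : ℝ, κ₀ ≤ κ →
      ∀ hD : (Matrix.fromBlocks L 0 0 (W + (κ : ℂ) • E₂)).PosDef,
        specNorm ((psqrt hD)⁻¹ *
            (Matrix.fromBlocks L 0 0 (W + (κ : ℂ) • E₂) -
              Matrix.fromBlocks L Rᴴ R (W + (κ : ℂ) • E₂)) *
            (psqrt hD)⁻¹) ≤ C / Real.sqrt κ := by
  obtain ⟨hL, hW⟩ := posDef_blocks hK
  obtain ⟨lam, hlam, hco⟩ := coercive_of_posDef hE₂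
  set T₁ : Matrix (Fin k) (Fin k) ℂ := (psqrt hL)⁻¹ with hT₁
  set cA := frobNorm (T₁ * Rᴴ) with hcA
  set cB := frobNorm (R * T₁) with hcB
  set c₀ := max cA cB + 1 with hc₀
  have hcA0 : 0 ≤ cA := Real.sqrt_nonneg _
  have hcB0 : 0 ≤ cB := Real.sqrt_nonneg _
  have hc₀pos : 0 < c₀ := by
    have : (0:ℝ) ≤ max cA cB := le_trans hcA0 (le_max_left _ _)
    linarith
  refine ⟨c₀ / Real.sqrt lam, by positivity, 1, one_pos, ?_⟩
  intro κ hκ hD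
  have hκpos : (0:ℝ) < κ := lt_of_lt_of_le one_pos hκ
  obtain ⟨hL', hM⟩ := posDef_blocks hD
  set Mκ := W + (κ : ℂ) • E₂ with hMκdef
  set S₂ := psqrt hM with hS₂
  set T₂ : Matrix (Fin m) (Fin m) ℂ := S₂⁻¹ with hT₂
  -- structure of the sqrt and its inverse
  have hsq : psqrt hD = fromBlocks (psqrt hL) 0 0 S₂ := by
    rw [blockSqrt hL hM hD]
  have hinv : (psqrt hD)⁻¹ = fromBlocks T₁ 0 0 T₂ := by
    rw [hsq, blockInv hL hM]
  -- the matrix in question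
  have hFeq : (psqrt hD)⁻¹ *
      (Matrix.fromBlocks L 0 0 Mκ - Matrix.fromBlocks L Rᴴ R Mκ) * (psqrt hD)⁻¹ =
      fromBlocks 0 (-(T₁ * Rᴴ * T₂)) (-(T₂ * R * T₁)) 0 := by
    have hdiff : Matrix.fromBlocks L 0 0 Mκ - Matrix.fromBlocks L Rᴴ R Mκ =
        fromBlocks 0 (-Rᴴ) (-R) 0 := by
      rw [sub_eq_add_neg, fromBlocks_neg, fromBlocks_add]
      congr 1 <;> simp
    rw [hdiff, hinv, fromBlocks_multiply, fromBlocks_multiply]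
    congr 1 <;> simp [Matrix.mul_assoc]
  -- coercivity of Mκ
  have hcoM : ∀ w : Fin m → ℂ, (κ * lam) * q w ≤ (dotProduct (star w) (Mκ *ᵥ w)).re := by
    intro w
    have hW0 : 0 ≤ (dotProduct (star w) (W *ᵥ w)).re := by
      have := hW.posSemidef.dotProduct_mulVec_nonneg w
      exact (Complex.le_def.mp this).1
    have hE0 := hco w
    have hsplit : (dotProduct (star w) (Mκ *ᵥ w)).re =
        (dotProduct (star w) (W *ᵥ w)).re + κ * (dotProduct (star w) (E₂ *ᵥ w)).re := by
      rw [hMκdef, add_mulVec, dotProduct_add, Complex.add_re, smul_mulVec,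
        dotProduct_smul]
      simp [Complex.smul_re]
    rw [hsplit]
    nlinarith [q_nonneg w]
  have hT₂q : ∀ y : Fin m → ℂ, q (T₂ *ᵥ y) ≤ (κ * lam)⁻¹ * q y := by
    intro y
    exact sqrtinv_q_bound hM (by positivity) hcoM y
  -- final estimate
  have hCκ : 0 ≤ c₀ / Real.sqrt lam / Real.sqrt κ := by positivity
  rw [hFeq]
  apply specNorm_le_of_q hCκ
  intro v
  have hsq' : (c₀ / Real.sqrt lam / Real.sqrt κ) ^ 2 = c₀ ^ 2 * (κ * lam)⁻¹ := by
    rw [div_pow, div_pow, Real.sq_sqrt hlam.le, Real.sq_sqrt hκpos.le]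
    field_simp
  rw [hsq']
  have hvsplit : v = Sum.elim (v ∘ Sum.inl) (v ∘ Sum.inr) := by funext i; cases i <;> rfl
  set v₁ := v ∘ Sum.inl
  set v₂ := v ∘ Sum.inr
  have hqv : q v = q v₁ + q v₂ := by rw [hvsplit, q_elim]
  have hmv : (fromBlocks 0 (-(T₁ * Rᴴ * T₂)) (-(T₂ * R * T₁)) 0) *ᵥ v =
      Sum.elim (-((T₁ * Rᴴ * T₂) *ᵥ v₂)) (-((T₂ * R * T₁) *ᵥ v₁)) := by
    rw [fromBlocks_mulVec]
    simp [neg_mulVec]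
    rfl
  rw [hmv, q_elim, q_neg, q_neg]
  have hterm1 : q ((T₁ * Rᴴ * T₂) *ᵥ v₂) ≤ cA ^ 2 * ((κ * lam)⁻¹ * q v₂) := by
    rw [← mulVec_mulVec]
    calc q ((T₁ * Rᴴ) *ᵥ (T₂ *ᵥ v₂)) ≤ cA ^ 2 * q (T₂ *ᵥ v₂) := q_mulVec_le _ _
      _ ≤ cA ^ 2 * ((κ * lam)⁻¹ * q v₂) :=
          mul_le_mul_of_nonneg_left (hT₂q v₂) (by positivity)
  have hterm2 : q ((T₂ * R * T₁) *ᵥ v₁) ≤ (κ * lam)⁻¹ * (cB ^ 2 * q v₁) := by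
    rw [Matrix.mul_assoc, ← mulVec_mulVec]
    calc q (T₂ *ᵥ ((R * T₁) *ᵥ v₁)) ≤ (κ * lam)⁻¹ * q ((R * T₁) *ᵥ v₁) :=
          hT₂q _
      _ ≤ (κ * lam)⁻¹ * (cB ^ 2 * q v₁) :=
          mul_le_mul_of_nonneg_left (q_mulVec_le _ _) (by positivity)
  have hA2 : cA ^ 2 ≤ c₀ ^ 2 := by nlinarith [le_max_left cA cB]
  have hB2 : cB ^ 2 ≤ c₀ ^ 2 := by nlinarith [le_max_right cA cB]
  have hκlam : (0:ℝ) ≤ (κ * lam)⁻¹ := by positivity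
  rw [hqv]
  nlinarith [q_nonneg v₁, q_nonneg v₂, hterm1, hterm2,
    mul_le_mul_of_nonneg_right hA2 (mul_nonneg hκlam (q_nonneg v₂)),
    mul_le_mul_of_nonneg_right hB2 (mul_nonneg hκlam (q_nonneg v₁))]
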